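/- Let $x\in\Gamma_n(A,u,v)\cap W_{\tau,n}$ with $n\ge2$, $\tau>1$, $\gcd(u,v)=1$. Then for all sufficiently large $q$, any integers $p_1,\dots,p_n$ with $|x_i - p_i/q| < q^{-\tau}$ for all $i$ satisfy $(p_1/q,\dots,p_n/q)\in\Gamma_n(A,u,v)$, i.e., $v\sum_i a_i p_i = u q$. Consequently $\Gamma_n(A,u,v)\cap W_{\tau,n}$ equals the set of points in $\Gamma_n(A,u,v)$ that are $\tau$-approximable by infinitely many rational points lying on $\Gamma_n(A,u,v)$ itself. -/

import Mathlib

theorem approximations_lie_on_hyperplane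
    (n : ℕ) (hn : 2 ≤ n) (τ : ℝ) (hτ : 1 < τ)
    (a : Fin n → ℤ) (ha : a ≠ 0)
    (u v : ℕ) (hu : 0 < u) (hv : 0 < v) (huv : Nat.Coprime u v)
    (Γ W : Set (Fin n → ℝ))
    (hΓ : Γ = {x : Fin n → ℝ | ∑ i, (a i : ℝ) * x i = (u : ℝ) / (v : ℝ)})
    (hW : W = {x : Fin n → ℝ |
      {q : ℕ | 0 < q ∧ ∃ p : Fin n → ℤ,
        ∀ i, |x i - (p i : ℝ) / (q : ℝ)| < 1 / (q : ℝ) ^ τ}.Infinite}) :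
    (∀ x ∈ Γ ∩ W, ∃ N : ℕ, ∀ q : ℕ, N ≤ q → ∀ p : Fin n → ℤ,
      (∀ i, |x i - (p i : ℝ) / (q : ℝ)| < 1 / (q : ℝ) ^ τ) →
        (v : ℤ) * ∑ i, a i * p i = (u : ℤ) * (q : ℤ)) ∧
    Γ ∩ W = {x : Fin n → ℝ | x ∈ Γ ∧
      {q : ℕ | 0 < q ∧ ∃ p : Fin n → ℤ,
        (∀ i, |x i - (p i : ℝ) / (q : ℝ)| < 1 / (q : ℝ) ^ τ) ∧
        (v : ℤ) * ∑ i, a i * p i = (u : ℤ) * (q : ℤ)}.Infinite} := by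
  have hτ1 : 0 < τ - 1 := by linarith
  set S : ℤ := ∑ i, |a i| with hSdef
  have hS1 : 1 ≤ S := by
    obtain ⟨i, hi⟩ := Function.ne_iff.mp ha
    calc (1:ℤ) ≤ |a i| := Int.one_le_abs (by simpa using hi)
    _ ≤ S := Finset.single_le_sum (f := fun i => |a i|)
        (fun i _ => abs_nonneg _) (Finset.mem_univ i)
  have hv0 : (0:ℝ) < (v:ℝ) := by exact_mod_cast hv
  have hSR : (0:ℝ) < (S:ℝ) := by exact_mod_cast lt_of_lt_of_le one_pos hS1
  -- key arithmetic lemma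
  have key : ∀ x : Fin n → ℝ, (∑ i, (a i : ℝ) * x i = (u:ℝ)/(v:ℝ)) →
      ∀ q : ℕ, ((v:ℝ) * (S:ℝ) < (q:ℝ) ^ (τ - 1)) →
      ∀ p : Fin n → ℤ, (∀ i, |x i - (p i : ℝ)/(q:ℝ)| < 1/(q:ℝ)^τ) →
      (v:ℤ) * ∑ i, a i * p i = (u:ℤ) * (q:ℤ) := by
    intro x hx q hq p hp
    have hq1 : 1 ≤ q := by
      by_contra h
      push_neg at h
      interval_cases q
      rw [Nat.cast_zero, Real.zero_rpow (by linarith : τ - 1 ≠ 0)] at hq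
      nlinarith
    have hq0 : (0:ℝ) < (q:ℝ) := by exact_mod_cast hq1
    have hqτ : (0:ℝ) < (q:ℝ) ^ τ := Real.rpow_pos_of_pos hq0 τ
    have hqτ1 : (0:ℝ) < (q:ℝ) ^ (τ-1) := Real.rpow_pos_of_pos hq0 _
    have hqsplit : (q:ℝ) ^ τ = (q:ℝ) ^ (τ-1) * (q:ℝ) := by
      rw [show τ = (τ-1)+1 by ring]
      rw [Real.rpow_add hq0, Real.rpow_one]
      ring_nf
    -- the sum estimate
    have e0 : ∑ i, (a i:ℝ) * ((p i:ℝ)/(q:ℝ) - x i)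
        = (∑ i, (a i:ℝ) * (p i:ℝ))/(q:ℝ) - (u:ℝ)/(v:ℝ) := by
      rw [← hx]
      simp only [mul_sub, Finset.sum_sub_distrib, Finset.sum_div, mul_div_assoc]
    have ebound : |∑ i, (a i:ℝ) * ((p i:ℝ)/(q:ℝ) - x i)| ≤ (S:ℝ) / (q:ℝ)^τ := by
      calc |∑ i, (a i:ℝ) * ((p i:ℝ)/(q:ℝ) - x i)|
          ≤ ∑ i, |(a i:ℝ) * ((p i:ℝ)/(q:ℝ) - x i)| := Finset.abs_sum_le_sum_abs _ _
        _ ≤ ∑ i, |(a i:ℝ)| * (1/(q:ℝ)^τ) := by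
            apply Finset.sum_le_sum
            intro i _
            rw [abs_mul]
            apply mul_le_mul_of_nonneg_left _ (abs_nonneg _)
            rw [abs_sub_comm]
            exact le_of_lt (hp i)
        _ = (S:ℝ) / (q:ℝ)^τ := by
            rw [← Finset.sum_mul, hSdef]
            push_cast
            ring
    -- the integer is small
    have habs : |((v:ℤ) * ∑ i, a i * p i - (u:ℤ) * (q:ℤ) : ℝ)| < 1 := by
      have ediff : ((v:ℤ) * ∑ i, a i * p i - (u:ℤ) * (q:ℤ) : ℝ)
          = (v:ℝ) * (q:ℝ) * ∑ i, (a i:ℝ) * ((p i:ℝ)/(q:ℝ) - x i) := by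
        rw [e0]
        push_cast
        field_simp
      rw [ediff, abs_mul]
      have h1 : |(v:ℝ) * (q:ℝ)| = (v:ℝ) * (q:ℝ) := abs_of_pos (by positivity)
      rw [h1]
      calc (v:ℝ) * (q:ℝ) * |∑ i, (a i:ℝ) * ((p i:ℝ)/(q:ℝ) - x i)|
          ≤ (v:ℝ) * (q:ℝ) * ((S:ℝ) / (q:ℝ)^τ) :=
            mul_le_mul_of_nonneg_left ebound (by positivity)
        _ = (v:ℝ) * (S:ℝ) / (q:ℝ)^(τ-1) := by
            rw [hqsplit]
            field_simp
        _ < 1 := (div_lt_one hqτ1).mpr hq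
    have habsZ : |(v:ℤ) * ∑ i, a i * p i - (u:ℤ) * (q:ℤ)| < 1 := by
      exact_mod_cast habs
    have h0 := Int.abs_lt_one_iff.mp habsZ
    omega
  -- main statement
  have main : ∀ x ∈ Γ ∩ W, ∃ N : ℕ, ∀ q : ℕ, N ≤ q → ∀ p : Fin n → ℤ,
      (∀ i, |x i - (p i : ℝ) / (q : ℝ)| < 1 / (q : ℝ) ^ τ) →
        (v : ℤ) * ∑ i, a i * p i = (u : ℤ) * (q : ℤ) := by
    intro x hx
    have hxΓ : ∑ i, (a i : ℝ) * x i = (u:ℝ)/(v:ℝ) := by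
      have := hx.1; rw [hΓ] at this; exact this
    have htend : Filter.Tendsto (fun q:ℕ => (q:ℝ)^(τ-1)) Filter.atTop Filter.atTop :=
      (tendsto_rpow_atTop hτ1).comp tendsto_natCast_atTop_atTop
    obtain ⟨N, hN⟩ := Filter.eventually_atTop.mp
      (htend.eventually_gt_atTop ((v:ℝ) * (S:ℝ)))
    exact ⟨N, fun q hq p hp => key x hxΓ q (hN q hq) p hp⟩
  refine ⟨main, ?_⟩
  ext x
  constructor
  · intro hx
    obtain ⟨N, hN⟩ := main x hx
    refine ⟨hx.1, ?_⟩
    have hT : {q : ℕ | 0 < q ∧ ∃ p : Fin n → ℤ,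
        ∀ i, |x i - (p i : ℝ) / (q : ℝ)| < 1 / (q : ℝ) ^ τ}.Infinite := by
      have := hx.2; rw [hW] at this; exact this
    refine (hT.diff (Set.finite_lt_nat N)).mono ?_
    rintro q ⟨⟨hq0, p, hp⟩, hqN⟩
    simp only [Set.mem_setOf_eq, not_lt] at hqN
    exact ⟨hq0, p, hp, hN q hqN p hp⟩
  · rintro ⟨hxΓ, hInf⟩
    refine ⟨hxΓ, ?_⟩
    rw [hW]
    refine hInf.mono ?_
    rintro q ⟨hq0, p, hp, -⟩
    exact ⟨hq0, p, hp⟩
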